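/- Let V be a 2n-dimensional symplectic vector space, L a Lagrangian subspace, and Z ⊂ V a linear subspace that is weakly coisotropic with respect to L (i.e. p(Z) ⊇ p(Z^⊥) for the projection p : V → V/L). If Z is nonzero then dim Z ≥ n. More precisely, any nonzero weakly coisotropic subspace has dimension at least half the dimension of V. -/

import Mathlib

open Submodule Module

/-- Let `V` be a `2n`-dimensional symplectic vector space with Lagrangian subspace `L`
and quotient map `p : V → V/L`. Any nonzero subspace `Z` which is weakly coisotropic with
respect to `L` (i.e. `p(Z) ⊇ p(Z^⊥)`) has dimension at least `n`, half the dimension of `V`. -/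
theorem weakly_coisotropic_dim_ge {K V : Type*} [Field K] [AddCommGroup V] [Module K V]
    [FiniteDimensional K V] (n : ℕ)
    (ω : LinearMap.BilinForm K V) (halt : ω.IsAlt) (hnd : ω.Nondegenerate)
    (hdim : Module.finrank K V = 2 * n)
    (L : Submodule K V) (hL : ω.orthogonal L = L)
    (Z : Submodule K V) (hZne : Z ≠ ⊥)
    (hwc : Submodule.map L.mkQ (ω.orthogonal Z) ≤ Submodule.map L.mkQ Z) :
    n ≤ Module.finrank K Z := by
  have hrefl : ω.IsRefl := halt.isRefl
  set W := ω.orthogonal Z with hW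
  -- W ≤ Z ⊔ L
  have h1 : W ≤ Z ⊔ L := by
    calc W ≤ Submodule.comap L.mkQ (Submodule.map L.mkQ W) := Submodule.le_comap_map _ _
    _ ≤ Submodule.comap L.mkQ (Submodule.map L.mkQ Z) := Submodule.comap_mono hwc
    _ = Z ⊔ L := by rw [Submodule.comap_map_eq, Submodule.ker_mkQ]
  -- W ⊓ L ≤ Z ⊓ L
  have h2 : W ⊓ L ≤ Z ⊓ L := by
    refine le_inf ?_ inf_le_right
    have hsub : W ⊓ L ≤ ω.orthogonal (Z ⊔ L) := by
      rintro x ⟨hxW, hxL⟩ y hy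
      rw [← hL] at hxL
      obtain ⟨z, hz, l, hl, rfl⟩ := Submodule.mem_sup.mp hy
      have h1 : ω z x = 0 := hxW z hz
      have h2 : ω l x = 0 := hxL l hl
      simp [LinearMap.BilinForm.IsOrtho, h1, h2]
    have horth : ω.orthogonal (Z ⊔ L) ≤ Z := by
      have := LinearMap.BilinForm.orthogonal_le (B := ω) h1
      rwa [LinearMap.BilinForm.orthogonal_orthogonal hnd hrefl] at this
    exact hsub.trans horth
  -- dimension counting
  have hWdim : finrank K W = 2 * n - finrank K Z := by
    rw [hW, LinearMap.BilinForm.finrank_orthogonal hnd, hdim]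
  have hZle : finrank K Z ≤ 2 * n := hdim ▸ Submodule.finrank_le Z
  have hLdim : finrank K L = n := by
    have := LinearMap.BilinForm.finrank_orthogonal hnd L
    rw [hL, hdim] at this
    have hLle : finrank K L ≤ 2 * n := hdim ▸ Submodule.finrank_le L
    omega
  have e1 : finrank K ↥(W ⊔ L) + finrank K ↥(W ⊓ L) = finrank K W + finrank K L :=
    Submodule.finrank_sup_add_finrank_inf_eq W L
  have e2 : finrank K ↥(Z ⊔ L) + finrank K ↥(Z ⊓ L) = finrank K Z + finrank K L :=
    Submodule.finrank_sup_add_finrank_inf_eq Z L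
  have i1 : finrank K ↥(W ⊔ L) ≤ finrank K ↥(Z ⊔ L) :=
    Submodule.finrank_mono (sup_le h1 le_sup_right)
  have i2 : finrank K ↥(W ⊓ L) ≤ finrank K ↥(Z ⊓ L) := Submodule.finrank_mono h2
  omega
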